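/- Let d ≥ 1 and let Σ be a symmetric positive definite d×d real matrix, and let U be a standard Gaussian random vector N(0, Id_d). Then the total variation distance satisfies ‖N(0, Id) − N(0, Σ)‖_TV ≤ P(‖Σ^{1/2}U‖² − ‖U‖² ≥ log det(Σ)) − P(‖U‖² − ‖Σ^{−1/2}U‖² ≥ log det(Σ)). -/

import Mathlib

open MeasureTheory Real Matrix

/-- The centered Gaussian measure `N(0, Σ)` on `ℝ^d` with positive definite
covariance matrix `Σ`, defined through its density with respect to Lebesgue
measure. -/
noncomputable def gaussCov (d : ℕ) (S : Matrix (Fin d) (Fin d) ℝ) : Measure (Fin d → ℝ) :=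
  volume.withDensity fun x =>
    ENNReal.ofReal ((2 * π) ^ (-(d : ℝ) / 2) * S.det ^ (-(1 : ℝ) / 2)
      * Real.exp (-(∑ i, x i * (S⁻¹ *ᵥ x) i) / 2))

/-- The positive semidefinite square root, as defined in the older Mathlib. -/
noncomputable def Matrix.PosSemidef.sqrt {n : Type*} [Fintype n] [DecidableEq n]
    {A : Matrix n n ℝ} (hA : A.PosSemidef) : Matrix n n ℝ :=
  (hA.1.eigenvectorUnitary : Matrix n n ℝ) * diagonal ((↑) ∘ (Real.sqrt ∘ hA.1.eigenvalues)) *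
    (star hA.1.eigenvectorUnitary : Matrix n n ℝ)

section
open scoped MatrixOrder

lemma Matrix.PosSemidef.sqrt_eq_cfcSqrt {n : Type*} [Fintype n] [DecidableEq n]
    {A : Matrix n n ℝ} (hA : A.PosSemidef) : hA.sqrt = CFC.sqrt A := by
  rw [CFC.sqrt_eq_real_sqrt A hA.nonneg, cfcₙ_eq_cfc, hA.1.cfc_eq]
  simp [IsHermitian.cfc, Matrix.PosSemidef.sqrt, Unitary.conjStarAlgAut_apply]
  rfl

lemma Matrix.PosSemidef.sqrt_mul_self {n : Type*} [Fintype n] [DecidableEq n]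
    {A : Matrix n n ℝ} (hA : A.PosSemidef) : hA.sqrt * hA.sqrt = A := by
  rw [hA.sqrt_eq_cfcSqrt]
  exact CFC.sqrt_mul_sqrt_self A hA.nonneg

lemma Matrix.PosSemidef.posSemidef_sqrt {n : Type*} [Fintype n] [DecidableEq n]
    {A : Matrix n n ℝ} (hA : A.PosSemidef) : hA.sqrt.PosSemidef := by
  rw [hA.sqrt_eq_cfcSqrt]
  exact (CFC.sqrt_nonneg A).posSemidef

lemma Matrix.PosSemidef.eq_sqrt_of_sq_eq {n : Type*} [Fintype n] [DecidableEq n]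
    {A : Matrix n n ℝ} (hA : A.PosSemidef) {B : Matrix n n ℝ} (hB : B.PosSemidef)
    (h : A ^ 2 = B) : A = hB.sqrt := by
  rw [hB.sqrt_eq_cfcSqrt, eq_comm, CFC.sqrt_eq_iff B A hB.nonneg hA.nonneg, ← sq, h]

end

namespace BvMAux

/-- The Gaussian density. -/
noncomputable def dens (d : ℕ) (S : Matrix (Fin d) (Fin d) ℝ) (x : Fin d → ℝ) : ℝ :=
  (2 * π) ^ (-(d : ℝ) / 2) * S.det ^ (-(1 : ℝ) / 2) * Real.exp (-(∑ i, x i * (S⁻¹ *ᵥ x) i) / 2)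

variable {d : ℕ} {S : Matrix (Fin d) (Fin d) ℝ}

lemma dotmv (A : Matrix (Fin d) (Fin d) ℝ) (x y : Fin d → ℝ) :
    (A *ᵥ x) ⬝ᵥ y = x ⬝ᵥ (Aᵀ *ᵥ y) := by
  rw [dotProduct_comm, dotProduct_mulVec, mulVec_transpose, dotProduct_comm]

lemma dens_one (x : Fin d → ℝ) :
    dens d 1 x = (2 * π) ^ (-(d : ℝ) / 2) * Real.exp (-(∑ i, x i * x i) / 2) := by
  simp [dens, inv_one, Matrix.one_mulVec, Matrix.det_one, Real.one_rpow]

lemma cont_mulVec (M : Matrix (Fin d) (Fin d) ℝ) : Continuous fun x : Fin d → ℝ => M *ᵥ x := by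
  refine continuous_pi fun i => ?_
  simp only [Matrix.mulVec, dotProduct]
  exact continuous_finset_sum _ fun j _ => (continuous_const.mul (continuous_apply j))

lemma cont_qf (M N : Matrix (Fin d) (Fin d) ℝ) :
    Continuous fun x : Fin d → ℝ => ∑ i, (M *ᵥ x) i * (N *ᵥ x) i :=
  continuous_finset_sum _ fun i _ =>
    ((continuous_apply i).comp (cont_mulVec M)).mul ((continuous_apply i).comp (cont_mulVec N))

lemma cont_dens : Continuous (dens d S) := by
  unfold dens
  refine continuous_const.mul (Real.continuous_exp.comp ?_)
  have h := cont_qf (1 : Matrix (Fin d) (Fin d) ℝ) S⁻¹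
  simp only [Matrix.one_mulVec] at h
  exact (h.neg).div_const 2

lemma cont_sq_qf (M : Matrix (Fin d) (Fin d) ℝ) :
    Continuous fun x : Fin d → ℝ => ∑ i, ((M *ᵥ x) i) ^ 2 := by
  have h := cont_qf M M
  simp only [← sq] at h
  exact h

lemma int_gauss_1d : ∫ t : ℝ, Real.exp (-(t * t) / 2) = Real.sqrt (2 * π) := by
  have h : (fun t : ℝ => Real.exp (-(t * t) / 2)) = fun t : ℝ => Real.exp (-(1/2) * t ^ 2) := by
    ext t; ring_nf
  have h2 : π / (1/2 : ℝ) = 2 * π := by ring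
  rw [h, integral_gaussian, h2]

lemma integral_dens_one : ∫ x : Fin d → ℝ, dens d 1 x = 1 := by
  have hexp : ∀ x : Fin d → ℝ, Real.exp (-(∑ i, x i * x i) / 2)
      = ∏ i, Real.exp (-(x i * x i) / 2) := by
    intro x
    rw [← Real.exp_sum]
    congr 1
    rw [← Finset.sum_div, ← Finset.sum_neg_distrib]
  simp only [dens_one, hexp]
  rw [integral_const_mul, volume_pi,
    integral_fintype_prod_eq_pow (ι := Fin d) (f := fun t : ℝ => Real.exp (-(t * t) / 2)), int_gauss_1d]
  have h2π : (0:ℝ) < 2 * π := by positivity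
  simp only [Fintype.card_fin]
  rw [Real.sqrt_eq_rpow, ← Real.rpow_natCast ((2*π) ^ ((1:ℝ)/2)) d, ← Real.rpow_mul h2π.le,
    ← Real.rpow_add h2π]
  have h0 : -(d:ℝ) / 2 + 1/2 * d = 0 := by ring
  rw [h0, Real.rpow_zero]

lemma integrable_dens_one : Integrable (dens d 1) := by
  have hexp : (dens d 1) = fun x : Fin d → ℝ =>
      (2 * π) ^ (-(d : ℝ) / 2) * ∏ i, Real.exp (-(x i * x i) / 2) := by
    ext x
    rw [dens_one, ← Real.exp_sum]
    congr 2
    rw [← Finset.sum_div, ← Finset.sum_neg_distrib]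
  rw [hexp]
  apply Integrable.const_mul
  apply Integrable.fintype_prod (f := fun (_ : Fin d) (t : ℝ) => Real.exp (-(t * t) / 2))
  intro i
  have h : (fun t : ℝ => Real.exp (-(t * t) / 2)) = fun t : ℝ => Real.exp (-(1/2) * t ^ 2) := by
    ext t; ring_nf
  rw [h]
  exact integrable_exp_neg_mul_sq (by norm_num)

lemma gaussCov_apply {C : Set (Fin d → ℝ)} (hC : MeasurableSet C) :
    gaussCov d S C = ∫⁻ x in C, ENNReal.ofReal (dens d S x) := by
  rw [show gaussCov d S = volume.withDensity fun x => ENNReal.ofReal (dens d S x) from rfl,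
    withDensity_apply _ hC]

lemma gaussCov_one_univ : gaussCov d 1 Set.univ = 1 := by
  rw [gaussCov_apply MeasurableSet.univ, Measure.restrict_univ,
    ← ofReal_integral_eq_lintegral_ofReal integrable_dens_one
      (Filter.Eventually.of_forall fun x => by
        rw [dens_one]
        positivity),
    integral_dens_one, ENNReal.ofReal_one]

section
variable (hS : S.PosDef)

lemma sqrtT : hS.posSemidef.sqrt * hS.posSemidef.sqrt = S := hS.posSemidef.sqrt_mul_self

lemma T_symm : (hS.posSemidef.sqrt)ᵀ = hS.posSemidef.sqrt := by
  rw [← conjTranspose_eq_transpose_of_trivial]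
  exact hS.posSemidef.posSemidef_sqrt.isHermitian.eq

lemma detT_pos : 0 < (hS.posSemidef.sqrt).det := by
  have h1 : (hS.posSemidef.sqrt).det * (hS.posSemidef.sqrt).det = S.det := by
    rw [← det_mul, sqrtT hS]
  have h2 : 0 ≤ (hS.posSemidef.sqrt).det := by
    have hH := hS.posSemidef.posSemidef_sqrt
    rw [hH.isHermitian.det_eq_prod_eigenvalues]
    exact Finset.prod_nonneg fun i _ => hH.eigenvalues_nonneg i
  nlinarith [hS.det_pos]

lemma detT_eq : (hS.posSemidef.sqrt).det = S.det ^ ((1:ℝ)/2) := by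
  have h1 : (hS.posSemidef.sqrt).det * (hS.posSemidef.sqrt).det = S.det := by
    rw [← det_mul, sqrtT hS]
  rw [← Real.sqrt_eq_rpow, ← h1, Real.sqrt_mul_self (detT_pos hS).le]

lemma R_eq : hS.inv.posSemidef.sqrt = (hS.posSemidef.sqrt)⁻¹ := by
  have hinv : ((hS.posSemidef.sqrt)⁻¹).PosSemidef := (hS.posSemidef.posSemidef_sqrt).inv
  have hsq : ((hS.posSemidef.sqrt)⁻¹) ^ 2 = S⁻¹ := by
    rw [pow_two, ← Matrix.mul_inv_rev, sqrtT hS]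
  exact (hinv.eq_sqrt_of_sq_eq hS.inv.posSemidef hsq).symm

lemma Tinv_mul : (hS.posSemidef.sqrt)⁻¹ * hS.posSemidef.sqrt = 1 :=
  Matrix.nonsing_inv_mul _ (isUnit_iff_ne_zero.mpr (detT_pos hS).ne')

lemma T_mul_inv : hS.posSemidef.sqrt * (hS.posSemidef.sqrt)⁻¹ = 1 :=
  Matrix.mul_nonsing_inv _ (isUnit_iff_ne_zero.mpr (detT_pos hS).ne')

lemma Sinv_mulVec_T (x : Fin d → ℝ) :
    S⁻¹ *ᵥ (hS.posSemidef.sqrt *ᵥ x) = (hS.posSemidef.sqrt)⁻¹ *ᵥ x := by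
  have h : S⁻¹ = (hS.posSemidef.sqrt)⁻¹ * (hS.posSemidef.sqrt)⁻¹ := by
    rw [← Matrix.mul_inv_rev, sqrtT hS]
  rw [h, mulVec_mulVec, mul_assoc, Tinv_mul hS, mul_one]

lemma Tinv_mulVec_T (x : Fin d → ℝ) :
    (hS.posSemidef.sqrt)⁻¹ *ᵥ (hS.posSemidef.sqrt *ᵥ x) = x := by
  rw [mulVec_mulVec, Tinv_mul hS, one_mulVec]

lemma qf1 (x : Fin d → ℝ) :
    ∑ i, (hS.posSemidef.sqrt *ᵥ x) i * (S⁻¹ *ᵥ (hS.posSemidef.sqrt *ᵥ x)) i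
      = ∑ i, x i * x i := by
  rw [Sinv_mulVec_T hS]
  calc ∑ i, (hS.posSemidef.sqrt *ᵥ x) i * ((hS.posSemidef.sqrt)⁻¹ *ᵥ x) i
      = (hS.posSemidef.sqrt *ᵥ x) ⬝ᵥ ((hS.posSemidef.sqrt)⁻¹ *ᵥ x) := rfl
    _ = x ⬝ᵥ ((hS.posSemidef.sqrt)ᵀ *ᵥ ((hS.posSemidef.sqrt)⁻¹ *ᵥ x)) := dotmv _ _ _
    _ = ∑ i, x i * x i := by
        rw [T_symm hS, mulVec_mulVec, T_mul_inv hS, one_mulVec]; rfl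

lemma qf2 (x : Fin d → ℝ) :
    ∑ i, ((hS.inv.posSemidef.sqrt *ᵥ x) i) ^ 2 = ∑ i, x i * (S⁻¹ *ᵥ x) i := by
  rw [R_eq hS]
  have hsinv : ((hS.posSemidef.sqrt)⁻¹)ᵀ = (hS.posSemidef.sqrt)⁻¹ := by
    rw [Matrix.transpose_nonsing_inv, T_symm hS]
  calc ∑ i, (((hS.posSemidef.sqrt)⁻¹ *ᵥ x) i) ^ 2
      = ((hS.posSemidef.sqrt)⁻¹ *ᵥ x) ⬝ᵥ ((hS.posSemidef.sqrt)⁻¹ *ᵥ x) := by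
        simp [dotProduct, sq]
    _ = x ⬝ᵥ (((hS.posSemidef.sqrt)⁻¹)ᵀ *ᵥ ((hS.posSemidef.sqrt)⁻¹ *ᵥ x)) := dotmv _ _ _
    _ = ∑ i, x i * (S⁻¹ *ᵥ x) i := by
        rw [hsinv, mulVec_mulVec, ← Matrix.mul_inv_rev, sqrtT hS]; rfl

lemma dens_transform (x : Fin d → ℝ) :
    dens d 1 x = (hS.posSemidef.sqrt).det * dens d S (hS.posSemidef.sqrt *ᵥ x) := by
  rw [dens_one]
  unfold dens
  rw [qf1 hS x, detT_eq hS]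
  have hdet := hS.det_pos
  have h1 : S.det ^ ((1:ℝ)/2) * (S.det ^ (-(1:ℝ)/2)) = 1 := by
    rw [← Real.rpow_add hdet]
    norm_num
  linear_combination (-(2 * π) ^ (-(d : ℝ) / 2) * Real.exp (-(∑ i, x i * x i) / 2)) * h1

lemma gaussCov_change {C : Set (Fin d → ℝ)} (hC : MeasurableSet C) :
    gaussCov d S C = gaussCov d 1 ((fun x => hS.posSemidef.sqrt *ᵥ x) ⁻¹' C) := by
  have hdet : 0 < (hS.posSemidef.sqrt).det := detT_pos hS
  have hfmeas : Measurable fun x => ENNReal.ofReal (dens d S x) :=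
    ENNReal.measurable_ofReal.comp cont_dens.measurable
  have hTmeas : Measurable (toLin' hS.posSemidef.sqrt) :=
    (LinearMap.continuous_of_finiteDimensional _).measurable
  have hpre : (fun x => hS.posSemidef.sqrt *ᵥ x) ⁻¹' C = (toLin' hS.posSemidef.sqrt) ⁻¹' C := by
    ext x; simp [Matrix.toLin'_apply]
  have hmapvol : Measure.map (toLin' hS.posSemidef.sqrt) volume
      = ENNReal.ofReal |(hS.posSemidef.sqrt).det⁻¹| • volume :=
    Real.map_matrix_volume_pi_eq_smul_volume_pi hdet.ne'
  have key : ∫⁻ x in (toLin' hS.posSemidef.sqrt) ⁻¹' C,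
        ENNReal.ofReal (dens d S (toLin' hS.posSemidef.sqrt x)) ∂volume
      = ENNReal.ofReal ((hS.posSemidef.sqrt).det)⁻¹
          * ∫⁻ x in C, ENNReal.ofReal (dens d S x) ∂volume := by
    rw [← setLIntegral_map hC hfmeas hTmeas, hmapvol]
    rw [Measure.restrict_smul, lintegral_smul_measure, abs_of_pos (inv_pos.mpr hdet), smul_eq_mul]
  have hCpre : MeasurableSet ((fun x => hS.posSemidef.sqrt *ᵥ x) ⁻¹' C) := by
    rw [hpre]; exact hTmeas hC
  rw [gaussCov_apply hC, gaussCov_apply hCpre]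
  have step : ∫⁻ x in (fun x => hS.posSemidef.sqrt *ᵥ x) ⁻¹' C, ENNReal.ofReal (dens d 1 x)
      = ENNReal.ofReal ((hS.posSemidef.sqrt).det)
        * ∫⁻ x in (toLin' hS.posSemidef.sqrt) ⁻¹' C,
            ENNReal.ofReal (dens d S (toLin' hS.posSemidef.sqrt x)) ∂volume := by
    rw [hpre, ← lintegral_const_mul _ (by exact hfmeas.comp hTmeas)]
    congr 1
    ext x
    rw [Matrix.toLin'_apply, ← ENNReal.ofReal_mul hdet.le, ← dens_transform hS]
  rw [step, key, ← mul_assoc, ← ENNReal.ofReal_mul hdet.le, mul_inv_cancel₀ hdet.ne',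
    ENNReal.ofReal_one, one_mul]

include hS in
lemma gaussCov_S_univ : gaussCov d S Set.univ = 1 := by
  rw [gaussCov_change hS MeasurableSet.univ, Set.preimage_univ, gaussCov_one_univ]

/-- The set where the `N(0,Σ)` density dominates the standard one. -/
lemma dens_le_iff (x : Fin d → ℝ) :
    dens d 1 x ≤ dens d S x ↔
      Real.log S.det ≤ ∑ i, (x i) ^ 2 - ∑ i, ((hS.inv.posSemidef.sqrt *ᵥ x) i) ^ 2 := by
  have hdet := hS.det_pos
  have hc : (0:ℝ) < (2 * π) ^ (-(d : ℝ) / 2) := Real.rpow_pos_of_pos (by positivity) _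
  have hrw : S.det ^ (-(1:ℝ)/2) = Real.exp (Real.log S.det * (-(1:ℝ)/2)) := by
    rw [Real.rpow_def_of_pos hdet]
  rw [dens_one]
  unfold dens
  rw [hrw, mul_assoc, mul_le_mul_iff_right₀ hc, ← Real.exp_add, Real.exp_le_exp, qf2 hS x]
  have hsq : ∑ i, (x i) ^ 2 = ∑ i, x i * x i := by simp [sq]
  rw [hsq]
  constructor <;> intro h <;> nlinarith [h]

end
end BvMAux

open BvMAux in
/-- Bound on the total variation distance between `N(0, Id)` and `N(0, Σ)`
used in the proof of the Bernstein–von Mises theorem: with `U ~ N(0, Id)`,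
`‖N(0,Id) - N(0,Σ)‖_TV ≤ P(‖Σ^{1/2}U‖² - ‖U‖² ≥ log det Σ)
  - P(‖U‖² - ‖Σ^{-1/2}U‖² ≥ log det Σ)`. -/
theorem stmt_13 (d : ℕ) (hd : 1 ≤ d) (S : Matrix (Fin d) (Fin d) ℝ) (hS : S.PosDef) :
    ∀ A : Set (Fin d → ℝ), MeasurableSet A →
      |(gaussCov d 1 A).toReal - (gaussCov d S A).toReal|
        ≤ (gaussCov d 1 {x | Real.log S.det
              ≤ ∑ i, ((hS.posSemidef.sqrt *ᵥ x) i) ^ 2 - ∑ i, (x i) ^ 2}).toReal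
          - (gaussCov d 1 {x | Real.log S.det
              ≤ ∑ i, (x i) ^ 2 - ∑ i, ((hS.inv.posSemidef.sqrt *ᵥ x) i) ^ 2}).toReal := by
  intro A hA
  set B : Set (Fin d → ℝ) := {x | Real.log S.det
      ≤ ∑ i, (x i) ^ 2 - ∑ i, ((hS.inv.posSemidef.sqrt *ᵥ x) i) ^ 2} with hBdef
  set S₁ : Set (Fin d → ℝ) := {x | Real.log S.det
      ≤ ∑ i, ((hS.posSemidef.sqrt *ᵥ x) i) ^ 2 - ∑ i, (x i) ^ 2} with hS1def
  have c0 : Continuous fun x : Fin d → ℝ => ∑ i, (x i) ^ 2 :=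
    continuous_finset_sum _ fun i _ => (continuous_apply i).pow 2
  have hBmeas : MeasurableSet B :=
    measurableSet_le measurable_const ((c0.sub (cont_sq_qf _)).measurable)
  have hS1meas : MeasurableSet S₁ :=
    measurableSet_le measurable_const (((cont_sq_qf _).sub c0).measurable)
  haveI : IsProbabilityMeasure (gaussCov d 1) := ⟨gaussCov_one_univ⟩
  haveI : IsProbabilityMeasure (gaussCov d S) := ⟨gaussCov_S_univ hS⟩
  -- S₁ is the preimage of B under multiplication by the square root
  have hS1pre : S₁ = (fun x => hS.posSemidef.sqrt *ᵥ x) ⁻¹' B := by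
    ext x
    simp only [hS1def, hBdef, Set.mem_setOf_eq, Set.mem_preimage]
    rw [R_eq hS, Tinv_mulVec_T hS]
  have hPS1 : gaussCov d S B = gaussCov d 1 S₁ := by
    rw [gaussCov_change hS hBmeas, hS1pre]
  -- monotonicity of measures on subsets of B and of Bᶜ
  have mono1 : ∀ C : Set (Fin d → ℝ), MeasurableSet C → C ⊆ B →
      gaussCov d 1 C ≤ gaussCov d S C := by
    intro C hC hsub
    rw [gaussCov_apply hC, gaussCov_apply hC]
    refine setLIntegral_mono (ENNReal.measurable_ofReal.comp cont_dens.measurable)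
      fun x hx => ENNReal.ofReal_le_ofReal ?_
    exact (dens_le_iff hS x).mpr (hsub hx)
  have mono2 : ∀ C : Set (Fin d → ℝ), MeasurableSet C → C ⊆ Bᶜ →
      gaussCov d S C ≤ gaussCov d 1 C := by
    intro C hC hsub
    rw [gaussCov_apply hC, gaussCov_apply hC]
    refine setLIntegral_mono (ENNReal.measurable_ofReal.comp cont_dens.measurable)
      fun x hx => ENNReal.ofReal_le_ofReal ?_
    exact le_of_not_ge fun h => (hsub hx) ((dens_le_iff hS x).mp h)
  -- the core estimate
  have core : ∀ C : Set (Fin d → ℝ), MeasurableSet C →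
      (gaussCov d S C).toReal - (gaussCov d 1 C).toReal
        ≤ (gaussCov d S B).toReal - (gaussCov d 1 B).toReal := by
    intro C hC
    have eP : (gaussCov d 1 C).toReal
        = (gaussCov d 1 (C ∩ B)).toReal + (gaussCov d 1 (C \ B)).toReal := by
      rw [← ENNReal.toReal_add (measure_ne_top _ _) (measure_ne_top _ _),
        measure_inter_add_diff C hBmeas]
    have eQ : (gaussCov d S C).toReal
        = (gaussCov d S (C ∩ B)).toReal + (gaussCov d S (C \ B)).toReal := by
      rw [← ENNReal.toReal_add (measure_ne_top _ _) (measure_ne_top _ _),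
        measure_inter_add_diff C hBmeas]
    have ePB : (gaussCov d 1 B).toReal
        = (gaussCov d 1 (C ∩ B)).toReal + (gaussCov d 1 (B \ C)).toReal := by
      rw [← ENNReal.toReal_add (measure_ne_top _ _) (measure_ne_top _ _), Set.inter_comm,
        measure_inter_add_diff B hC]
    have eQB : (gaussCov d S B).toReal
        = (gaussCov d S (C ∩ B)).toReal + (gaussCov d S (B \ C)).toReal := by
      rw [← ENNReal.toReal_add (measure_ne_top _ _) (measure_ne_top _ _), Set.inter_comm,
        measure_inter_add_diff B hC]
    have i2 : (gaussCov d S (C \ B)).toReal ≤ (gaussCov d 1 (C \ B)).toReal :=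
      ENNReal.toReal_mono (measure_ne_top _ _)
        (mono2 _ (hC.diff hBmeas) fun x hx => hx.2)
    have i3 : (gaussCov d 1 (B \ C)).toReal ≤ (gaussCov d S (B \ C)).toReal :=
      ENNReal.toReal_mono (measure_ne_top _ _)
        (mono1 _ (hBmeas.diff hC) Set.diff_subset)
    linarith
  rw [abs_sub_le_iff]
  constructor
  · -- use the core estimate on the complement
    have hcompl := core Aᶜ hA.compl
    have h1 : (gaussCov d 1 A).toReal + (gaussCov d 1 Aᶜ).toReal = 1 := by
      rw [← ENNReal.toReal_add (measure_ne_top _ _) (measure_ne_top _ _),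
        prob_add_prob_compl hA, ENNReal.toReal_one]
    have h2 : (gaussCov d S A).toReal + (gaussCov d S Aᶜ).toReal = 1 := by
      rw [← ENNReal.toReal_add (measure_ne_top _ _) (measure_ne_top _ _),
        prob_add_prob_compl hA, ENNReal.toReal_one]
    rw [hPS1] at hcompl
    linarith
  · have h := core A hA
    rw [hPS1] at h
    linarith
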